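/- Let t > 1 and suppose 0 < x < 1, 0 < y < 1 + (t-1)x. With k₀ = ((t^2-1)xy + t(t-1)x - (t-1)y + t)/(2((t-1)x+1)^2), we have 1/2 < k₀ < t/2. Explicitly, k₀ - 1/2 = (t-1)((x-1)^2 + (x-1)y - tx(x-y-1))/(2((t-1)x+1)^2) > 0 and t/2 - k₀ = (t-1)(t(t-1)x^2 - (t+1)xy + tx + y)/(2((t-1)x+1)^2) > 0. -/
import Mathlib

theorem stmt_18 (t x y : ℝ) (ht : 1 < t)
    (hx0 : 0 < x) (hx1 : x < 1) (hy0 : 0 < y) (hy1 : y < 1 + (t-1)*x)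
    (k₀ : ℝ)
    (hk₀ : k₀ = ((t^2-1)*x*y + t*(t-1)*x - (t-1)*y + t)/(2*((t-1)*x+1)^2)) :
    (k₀ - 1/2 = (t-1)*((x-1)^2 + (x-1)*y - t*x*(x-y-1))/(2*((t-1)*x+1)^2) ∧
      0 < k₀ - 1/2) ∧
    (t/2 - k₀ = (t-1)*(t*(t-1)*x^2 - (t+1)*x*y + t*x + y)/(2*((t-1)*x+1)^2) ∧
      0 < t/2 - k₀) := by
  have hd : (0:ℝ) < (t-1)*x+1 := by nlinarith
  have hd2 : (0:ℝ) < 2*((t-1)*x+1)^2 := by positivity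
  have ht1 : (0:ℝ) < t - 1 := by linarith
  have hg : (0:ℝ) < (x-1)^2 + (x-1)*y - t*x*(x-y-1) := by
    nlinarith [mul_pos (mul_pos (lt_trans one_pos ht) hx0) (show (0:ℝ) < 1+y-x by linarith),
      mul_pos (show (0:ℝ) < 1-x by linarith) (show (0:ℝ) < 1+(t-1)*x - y by linarith)]
  have hh : (0:ℝ) < t*(t-1)*x^2 - (t+1)*x*y + t*x + y := by
    nlinarith [mul_pos (mul_pos (lt_trans one_pos ht) hx0) (show (0:ℝ) < 1+(t-1)*x - y by linarith),
      mul_pos hy0 (show (0:ℝ) < 1-x by linarith)]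
  have e1 : k₀ - 1/2 = (t-1)*((x-1)^2 + (x-1)*y - t*x*(x-y-1))/(2*((t-1)*x+1)^2) := by
    rw [hk₀]; field_simp; ring
  have e2 : t/2 - k₀ = (t-1)*(t*(t-1)*x^2 - (t+1)*x*y + t*x + y)/(2*((t-1)*x+1)^2) := by
    rw [hk₀]; field_simp; ring
  refine ⟨⟨e1, ?_⟩, ⟨e2, ?_⟩⟩
  · rw [e1]; positivity
  · rw [e2]; positivity
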